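/- Let P : ℝ² → ℝ be a submetry (equivalently, a surjective map with dist(P(x), t) = dist(x, P⁻¹(t)) for all x, t). Then each fiber P⁻¹(t) is a closed convex subset of ℝ² that is nowhere dense (has empty interior). -/

import Mathlib

lemma comb_norm_sq {E : Type*} [NormedAddCommGroup E] [InnerProductSpace ℝ E]
    (u v : E) (a b : ℝ) (hab : a + b = 1) :
    ‖a • u + b • v‖ ^ 2 = a * ‖u‖ ^ 2 + b * ‖v‖ ^ 2 - a * b * ‖u - v‖ ^ 2 := by
  have h1 := norm_add_sq_real (a • u) (b • v)
  have h2 := norm_sub_sq_real u v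
  rw [real_inner_smul_left, real_inner_smul_right] at h1
  have hu : ‖a • u‖ ^ 2 = a ^ 2 * ‖u‖ ^ 2 := by
    rw [norm_smul]; simp [mul_pow, sq_abs]
  have hv : ‖b • v‖ ^ 2 = b ^ 2 * ‖v‖ ^ 2 := by
    rw [norm_smul]; simp [mul_pow, sq_abs]
  have hb : b = 1 - a := by linarith
  subst hb
  nlinarith [h1, h2, hu, hv]

/-- Every fiber of a submetry `P : ℝ² → ℝ` is a closed, convex,
nowhere dense subset of the plane. -/
theorem submetry_R2_to_R_fibers
    (P : EuclideanSpace ℝ (Fin 2) → ℝ)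
    (hsurj : Function.Surjective P)
    (hP : ∀ (x : EuclideanSpace ℝ (Fin 2)) (t : ℝ),
      dist (P x) t = Metric.infDist x (P ⁻¹' {t}))
    (t : ℝ) :
    IsClosed (P ⁻¹' {t}) ∧ Convex ℝ (P ⁻¹' {t}) ∧ interior (P ⁻¹' {t}) = ∅ := by
  -- fibers are nonempty
  have hne : ∀ s : ℝ, (P ⁻¹' {s}).Nonempty := by
    intro s
    obtain ⟨w, hw⟩ := hsurj s
    exact ⟨w, hw⟩
  -- P is 1-Lipschitz, hence continuous
  have hlip : ∀ x y : EuclideanSpace ℝ (Fin 2), dist (P x) (P y) ≤ dist x y := by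
    intro x y
    rw [hP x (P y)]
    exact Metric.infDist_le_dist_of_mem rfl
  have hcont : Continuous P := by
    apply (LipschitzWith.continuous (K := 1))
    intro x y
    simpa [edist_dist] using ENNReal.ofReal_le_ofReal (hlip x y)
  -- from a point at distance < c from a fiber, extract a witness
  have hwitness : ∀ (p : EuclideanSpace ℝ (Fin 2)) (s c : ℝ),
      dist (P p) s < c → ∃ z, P z = s ∧ dist p z < c := by
    intro p s c hc
    rw [hP p s] at hc
    obtain ⟨z, hz, hzd⟩ := (Metric.infDist_lt_iff (hne s)).mp hc
    exact ⟨z, hz, hzd⟩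
  refine ⟨(isClosed_singleton).preimage hcont, ?_, ?_⟩
  · -- convexity
    intro x hx y hy a b ha hb hab
    simp only [Set.mem_preimage, Set.mem_singleton_iff] at hx hy ⊢
    obtain ⟨p, hp⟩ : ∃ p, p = a • x + b • y := ⟨_, rfl⟩
    rw [← hp]
    by_contra hne'
    obtain ⟨δ, hδ⟩ : ∃ δ, δ = |P p - t| := ⟨_, rfl⟩
    have hδpos : 0 < δ := hδ ▸ abs_pos.mpr (sub_ne_zero.mpr hne')
    obtain ⟨L, hL⟩ : ∃ L, L = ‖x - y‖ := ⟨_, rfl⟩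
    have habL : 0 ≤ a * b * L ^ 2 := by positivity
    obtain ⟨r, hr⟩ : ∃ r, r = δ / 4 + a * b * L ^ 2 / δ + δ + 1 := ⟨_, rfl⟩
    have hdiv : 0 ≤ a * b * L ^ 2 / δ := by positivity
    have hrδ : δ < r := by rw [hr]; linarith
    have hrbig : δ ^ 2 / 4 + a * b * L ^ 2 < r * δ := by
      have h1 : r * δ = δ ^ 2 / 4 + a * b * L ^ 2 + δ ^ 2 + δ := by
        rw [hr]; field_simp
      nlinarith
    -- target fiber
    obtain ⟨s, hds1, hds2⟩ : ∃ s, dist (P p) s = r - δ ∧ dist s t = r := by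
      rcases le_or_gt t (P p) with h | h
      · have hδ' : δ = P p - t := by rw [hδ, abs_of_nonneg (by linarith)]
        refine ⟨t + r, ?_, ?_⟩
        · rw [Real.dist_eq, abs_of_nonpos (by linarith)]; linarith
        · rw [Real.dist_eq, abs_of_nonneg (by linarith)]; ring
      · have hδ' : δ = t - P p := by rw [hδ, abs_of_neg (by linarith)]; ring
        refine ⟨t - r, ?_, ?_⟩
        · rw [Real.dist_eq, abs_of_nonneg (by linarith)]; linarith
        · rw [Real.dist_eq, abs_of_nonpos (by linarith)]; ring
    -- get a point z on the far fiber close to p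
    obtain ⟨z, hz, hzd⟩ := hwitness p s (r - δ / 2) (by rw [hds1]; linarith)
    -- z is far from both x and y
    have hzt : dist (P z) t = r := by rw [hz]; exact hds2
    have hzx : r ≤ dist z x := by
      rw [← hzt, hP z t]
      exact Metric.infDist_le_dist_of_mem (by simpa using hx)
    have hzy : r ≤ dist z y := by
      rw [← hzt, hP z t]
      exact Metric.infDist_le_dist_of_mem (by simpa using hy)
    -- the key norm identity
    have hdecomp : z - p = a • (z - x) + b • (z - y) := by
      have hmod : z - (a • x + b • y) =
          a • (z - x) + b • (z - y) + (1 - (a + b)) • z := by module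
      rw [hp, hmod, hab]
      simp
    have hid : dist z p ^ 2 = a * dist z x ^ 2 + b * dist z y ^ 2 - a * b * L ^ 2 := by
      have hsub : (z - x) - (z - y) = y - x := by abel
      have hcns := comb_norm_sq (z - x) (z - y) a b hab
      rw [hsub] at hcns
      rw [dist_eq_norm, dist_eq_norm, dist_eq_norm, hdecomp, hcns, hL, norm_sub_rev y x]
    have hr0 : 0 ≤ r := by linarith
    have hdzp : dist z p < r - δ / 2 := by rw [dist_comm]; exact hzd
    have h1 : a * r ^ 2 ≤ a * dist z x ^ 2 :=
      mul_le_mul_of_nonneg_left (pow_le_pow_left₀ hr0 hzx 2) ha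
    have h2 : b * r ^ 2 ≤ b * dist z y ^ 2 :=
      mul_le_mul_of_nonneg_left (pow_le_pow_left₀ hr0 hzy 2) hb
    have hsum : a * r ^ 2 + b * r ^ 2 = r ^ 2 := by rw [← add_mul, hab, one_mul]
    have hlow : r ^ 2 - a * b * L ^ 2 ≤ dist z p ^ 2 := by
      rw [hid]; linarith
    have hup : dist z p ^ 2 < (r - δ / 2) ^ 2 :=
      pow_lt_pow_left₀ hdzp dist_nonneg (by norm_num)
    have hexp : (r - δ / 2) ^ 2 = r ^ 2 - r * δ + δ ^ 2 / 4 := by ring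
    linarith
  · -- empty interior
    rw [Set.eq_empty_iff_forall_notMem]
    intro z hz
    obtain ⟨ε, hε, hball⟩ := Metric.isOpen_iff.mp isOpen_interior z hz
    have hzt : P z = t := by
      have := interior_subset hz
      simpa using this
    have hlt : dist (P z) (t + ε / 2) < (3 / 4) * ε := by
      rw [hzt, Real.dist_eq, abs_of_nonpos (by linarith)]
      linarith
    obtain ⟨w, hw, hwd⟩ := hwitness z (t + ε / 2) ((3 / 4) * ε) hlt
    have hwball : w ∈ Metric.ball z ε := by
      rw [Metric.mem_ball, dist_comm]
      linarith
    have hwt : P w = t := by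
      have := interior_subset (hball hwball)
      simpa using this
    rw [hwt] at hw
    linarith
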